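/- If (u⃗, B⃗) and (t⃗, C⃗) are proper factorization patterns, (vₙ)ₙ is (u⃗,B⃗)-adequate, (wₙ)ₙ is (t⃗,C⃗)-adequate, and vₙ ∼ₙ wₙ for every n, then u⃗ = t⃗ and B⃗ = C⃗. -/

import Mathlib

def Subw {A : Type*} (n : ℕ) (u : List A) : Set (List A) :=
  {w | w.length ≤ n ∧ w.Sublist u}

def simn {A : Type*} (n : ℕ) (u v : List A) : Prop := Subw n u = Subw n v

def content {A : Type*} (w : List A) : Set A := {a | a ∈ w}

def exactLang {A : Type*} (B : Set A) : Language A := {w | content w = B}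

/-- `patternLang u B n = u₀(B₁!)ⁿu₁⋯u_{p−1}(B_p!)ⁿu_p`. -/
def patternLang {A : Type*} : List (List A) → List (Set A) → ℕ → Language A
  | [u0], [], _ => {u0}
  | u0 :: us, b :: bs, n => {u0} * (exactLang b) ^ n * patternLang us bs n
  | _, _, _ => (0 : Language A)

/-- A factorization pattern `(u⃗, B⃗)` is proper: for all `i`,
`last(uᵢ) ∉ B_{i+1}`, `first(u_{i+1}) ∉ B_{i+1}` (1-indexed: `last(u_{i-1}) ∉ Bᵢ`,
`first(uᵢ) ∉ Bᵢ`), and if an interior `uᵢ` is empty then the two surrounding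
alphabets are incomparable. -/
def Proper {A : Type*} (u : List (List A)) (B : List (Set A)) : Prop :=
  (∀ i < B.length, ∀ a ∈ (u.getD i []).getLast?, a ∉ B.getD i ∅) ∧
  (∀ i < B.length, ∀ a ∈ (u.getD (i + 1) []).head?, a ∉ B.getD i ∅) ∧
  (∀ i, i + 1 < B.length → u.getD (i + 1) [] = [] →
    ¬ B.getD i ∅ ⊆ B.getD (i + 1) ∅ ∧ ¬ B.getD (i + 1) ∅ ⊆ B.getD i ∅)

namespace PPU
open List
variable {A : Type*}

abbrev Atom (A : Type*) := A ⊕ Set A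

def AtomL : Atom A → Language A
  | .inl a => {[], [a]}
  | .inr b => {y | ∀ x ∈ y, x ∈ b}

def Kat : List (Atom A) → Language A
  | [] => {[]}
  | x :: L => AtomL x * Kat L

lemma mem_inl_iff {a : A} {s : List A} : s ∈ AtomL (.inl a) ↔ s = [] ∨ s = [a] := Iff.rfl

lemma mem_inr_iff {b : Set A} {s : List A} : s ∈ AtomL (.inr b) ↔ ∀ x ∈ s, x ∈ b := Iff.rfl

lemma mem_Kat_nil {s : List A} : s ∈ Kat ([] : List (Atom A)) ↔ s = [] := Iff.rfl

lemma mem_Kat_cons {x : Atom A} {L s} :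
    s ∈ Kat (x :: L) ↔ ∃ s1 s2, s = s1 ++ s2 ∧ s1 ∈ AtomL x ∧ s2 ∈ Kat L := by
  show s ∈ AtomL x * Kat L ↔ _
  rw [Language.mem_mul]
  constructor
  · rintro ⟨a, ha, b, hb, rfl⟩; exact ⟨a, b, rfl, ha, hb⟩
  · rintro ⟨a, b, rfl, ha, hb⟩; exact ⟨a, ha, b, hb, rfl⟩

lemma nil_mem_atom (x : Atom A) : [] ∈ AtomL x := by
  cases x with
  | inl a => exact Or.inl rfl
  | inr b => intro y hy; simp at hy

lemma nil_mem_Kat (L : List (Atom A)) : [] ∈ Kat L := by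
  induction L with
  | nil => rfl
  | cons x L ih => exact mem_Kat_cons.2 ⟨[], [], rfl, nil_mem_atom x, ih⟩

lemma atom_dc {x : Atom A} {s t : List A} (h : s.Sublist t) (ht : t ∈ AtomL x) :
    s ∈ AtomL x := by
  cases x with
  | inl a =>
    rcases ht with rfl | rfl
    · left; exact List.sublist_nil.1 h
    · rcases List.sublist_singleton.1 h with rfl | rfl
      · exact Or.inl rfl
      · exact Or.inr rfl
  | inr b => intro y hy; exact ht y (h.mem hy)

lemma Kat_dc : ∀ (L : List (Atom A)) {s t : List A}, s.Sublist t → t ∈ Kat L → s ∈ Kat L := by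
  intro L
  induction L with
  | nil => intro s t h ht; rw [mem_Kat_nil] at *; subst ht; exact List.sublist_nil.1 h
  | cons x L ih =>
    intro s t h ht
    rcases mem_Kat_cons.1 ht with ⟨t1, t2, rfl, h1, h2⟩
    rcases List.sublist_append_iff.1 h with ⟨s1, s2, rfl, hs1, hs2⟩
    exact mem_Kat_cons.2 ⟨s1, s2, rfl, atom_dc hs1 h1, ih hs2 h2⟩

lemma Kat_le_cons {x : Atom A} {L : List (Atom A)} {s : List A} (hs : s ∈ Kat L) : s ∈ Kat (x :: L) := by
  exact mem_Kat_cons.2 ⟨[], s, rfl, nil_mem_atom x, hs⟩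

lemma mem_Kat_cons_inl {a : A} {L : List (Atom A)} {s} :
    s ∈ Kat (.inl a :: L) ↔ s ∈ Kat L ∨ ∃ s', s = a :: s' ∧ s' ∈ Kat L := by
  rw [mem_Kat_cons]
  constructor
  · rintro ⟨s1, s2, rfl, h1, h2⟩
    rcases h1 with rfl | rfl
    · exact Or.inl h2
    · exact Or.inr ⟨s2, rfl, h2⟩
  · rintro (h | ⟨s', rfl, h⟩)
    · exact ⟨[], s, rfl, Or.inl rfl, h⟩
    · exact ⟨[a], s', rfl, Or.inr rfl, h⟩

/-- prepend a letter of `b` -/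
lemma cons_mem_Kat_inr {b : Set A} {L : List (Atom A)} {a s} (ha : a ∈ b)
    (hs : s ∈ Kat (.inr b :: L)) : a :: s ∈ Kat (.inr b :: L) := by
  rcases mem_Kat_cons.1 hs with ⟨s1, s2, rfl, h1, h2⟩
  exact mem_Kat_cons.2 ⟨a :: s1, s2, rfl, by
    intro x hx
    rcases List.mem_cons.1 hx with rfl | hx
    · exact ha
    · exact h1 x hx, h2⟩

/-- a word starting outside `b` in `Kat (.inr b :: L)` is in `Kat L`. -/
lemma cons_mem_Kat_inr_iff {b : Set A} {L : List (Atom A)} {a s} (ha : a ∉ b) :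
    a :: s ∈ Kat (.inr b :: L) ↔ a :: s ∈ Kat L := by
  constructor
  · intro h
    rcases mem_Kat_cons.1 h with ⟨s1, s2, heq, h1, h2⟩
    cases s1 with
    | nil => simpa [heq] using h2
    | cons y s1' =>
      exfalso
      have : y = a := by simpa using congrArg List.head? heq.symm
      exact ha (this ▸ h1 y (List.mem_cons_self))
  · intro h; exact Kat_le_cons h

def RA : Atom A → Atom A → Prop
  | .inl _, .inl _ => True
  | .inl a, .inr b => a ∉ b
  | .inr b, .inl a => a ∉ b
  | .inr b, .inr c => ¬ b ⊆ c ∧ ¬ c ⊆ b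

def Reduced (L : List (Atom A)) : Prop :=
  List.Chain' RA L ∧ ∀ b : Set A, Sum.inr b ∈ L → b.Nonempty

lemma Reduced.tail {x : Atom A} {L} (h : Reduced (x :: L)) : Reduced L :=
  ⟨h.1.tail, fun b hb => h.2 b (List.mem_cons_of_mem x hb)⟩

lemma Reduced.rel {x y : Atom A} {L} (h : Reduced (x :: y :: L)) : RA x y :=
  List.isChain_cons_cons.1 h.1 |>.1

def compat (a : A) (L : List (Atom A)) : Prop :=
  ∀ (b : Set A) (L' : List (Atom A)), L = .inr b :: L' → a ∉ b

lemma compat_of_red_inl {a : A} {L : List (Atom A)} (h : Reduced (.inl a :: L)) :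
    compat a L := by
  rintro b L' rfl
  exact h.rel

lemma Wjoint : ∀ n : ℕ, ∀ L : List (Atom A), L.length ≤ n → Reduced L →
    (∀ (b : Set A) (L' : List (Atom A)), L = .inr b :: L' → ∀ c, c ∉ b →
      ∃ w, w ∈ Kat L ∧ c :: w ∉ Kat L') ∧
    (∀ a, compat a L → ∃ w, w ∈ Kat L ∧ a :: w ∉ Kat L) := by
  intro n
  induction n with
  | zero =>
    intro L hL _
    have : L = [] := List.eq_nil_of_length_eq_zero (Nat.le_zero.1 hL)
    subst this
    constructor
    · rintro b L' ⟨⟩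
    · intro a _
      exact ⟨[], nil_mem_Kat [], by rw [mem_Kat_nil]; simp⟩
  | succ n ih =>
    intro L hL hred
    have part1 : ∀ (b : Set A) (L' : List (Atom A)), L = .inr b :: L' → ∀ c, c ∉ b →
        ∃ w, w ∈ Kat L ∧ c :: w ∉ Kat L' := by
      rintro b L' rfl c hc
      match L' with
      | [] =>
        exact ⟨[], nil_mem_Kat _, by rw [mem_Kat_nil]; simp⟩
      | .inl d :: L'' =>
        -- use (W) at L''
        have hcompat : compat d L'' := compat_of_red_inl (hred.tail)
        have hlen : L''.length ≤ n := by
          simp only [List.length_cons] at hL; omega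
        obtain ⟨w'', hw1, hw2⟩ := (ih L'' hlen (hred.tail.tail)).2 d hcompat
        refine ⟨d :: w'', Kat_le_cons (mem_Kat_cons_inl.2 (Or.inr ⟨w'', rfl, hw1⟩)), ?_⟩
        intro hmem
        rcases mem_Kat_cons_inl.1 hmem with h | ⟨s', hs', h⟩
        · exact hw2 (Kat_dc L'' (by simp) h)
        · -- c :: d :: w'' = d :: s' : so c = d and s' = d :: w''
          have hcd : c = d := by simpa using congrArg List.head? hs'
          have : s' = d :: w'' := by simpa using (congrArg List.tail hs').symm
          subst this
          exact hw2 (Kat_dc L'' (by simpa [hcd] using List.Sublist.refl (d :: w'')) h)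
      | .inr b₂ :: L'' =>
        have hinc : ¬ b ⊆ b₂ := (hred.rel).1
        obtain ⟨e, heb, heb2⟩ := Set.not_subset.1 hinc
        have hlen : (Sum.inr b₂ :: L'' : List (Atom A)).length ≤ n := by
          simp only [List.length_cons] at hL ⊢; omega
        obtain ⟨w', hw1, hw2⟩ := (ih _ hlen (hred.tail)).1 b₂ L'' rfl e heb2
        refine ⟨e :: w', cons_mem_Kat_inr heb (Kat_le_cons hw1), ?_⟩
        intro hmem
        -- c :: e :: w' ∈ Kat (.inr b₂ :: L'')
        by_cases hcb2 : c ∈ b₂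
        · rcases mem_Kat_cons.1 hmem with ⟨s1, s2, heq, h1, h2⟩
          -- s1 over b₂; since e ∉ b₂, s1 is [] or [c]
          match s1, heq with
          | [], heq =>
            rw [List.nil_append] at heq
            exact hw2 (Kat_dc L'' (by simp) (heq ▸ h2))
          | [x], heq =>
            have : x = c := by simpa using congrArg List.head? heq.symm
            have hs2 : s2 = e :: w' := by simpa using congrArg List.tail heq.symm
            exact hw2 (by rw [hs2] at h2; exact h2)
          | x :: y :: s1', heq =>
            have hx : x = c := by simpa using congrArg List.head? heq.symm
            have hy : y = e := by
              have := congrArg List.tail heq.symm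
              simpa using congrArg List.head? this
            exact heb2 (hy ▸ h1 y (by simp))
        · rw [cons_mem_Kat_inr_iff hcb2] at hmem
          exact hw2 (Kat_dc _ (by simp) hmem)
    refine ⟨part1, ?_⟩
    intro a hcompat
    match L with
    | [] => exact ⟨[], nil_mem_Kat [], by rw [mem_Kat_nil]; simp⟩
    | .inr b :: L₂ =>
      have hab : a ∉ b := hcompat b L₂ rfl
      obtain ⟨w, hw1, hw2⟩ := part1 b L₂ rfl a hab
      exact ⟨w, hw1, fun h => hw2 ((cons_mem_Kat_inr_iff hab).1 h)⟩
    | .inl c :: L₂ =>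
      by_cases hsp : ∃ (b : Set A) (L₃ : List (Atom A)), L₂ = .inr b :: L₃ ∧ a ∈ b
      · obtain ⟨b, L₃, rfl, hab⟩ := hsp
        have hcb : c ∉ b := hred.rel
        have hac : a ≠ c := fun h => hcb (h ▸ hab)
        have hlen : (Sum.inr b :: L₃ : List (Atom A)).length ≤ n := by
          simp only [List.length_cons] at hL ⊢; omega
        obtain ⟨w₂, hw1, hw2⟩ := (ih _ hlen (hred.tail)).1 b L₃ rfl c hcb
        refine ⟨c :: w₂, mem_Kat_cons_inl.2 (Or.inr ⟨w₂, rfl, hw1⟩), ?_⟩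
        intro hmem
        rcases mem_Kat_cons_inl.1 hmem with h | ⟨s', hs', h⟩
        · -- a :: c :: w₂ ∈ Kat (.inr b :: L₃)
          rcases mem_Kat_cons.1 h with ⟨s1, s2, heq, h1, h2⟩
          match s1, heq with
          | [], heq =>
            rw [List.nil_append] at heq
            exact hw2 (Kat_dc L₃ (by simp) (heq ▸ h2))
          | [x], heq =>
            have hs2 : s2 = c :: w₂ := by simpa using congrArg List.tail heq.symm
            exact hw2 (by rw [hs2] at h2; exact h2)
          | x :: y :: s1', heq =>
            have hy : y = c := by
              have := congrArg List.tail heq.symm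
              simpa using congrArg List.head? this
            exact hcb (hy ▸ h1 y (by simp))
        · exact hac (by simpa using congrArg List.head? hs')
      · have hcompat2 : compat a L₂ := by
          rintro b L₃ rfl
          intro hab; exact hsp ⟨b, L₃, rfl, hab⟩
        have hlen : L₂.length ≤ n := by simp only [List.length_cons] at hL; omega
        obtain ⟨w₂, hw1, hw2⟩ := (ih L₂ hlen (hred.tail)).2 a hcompat2
        refine ⟨c :: w₂, mem_Kat_cons_inl.2 (Or.inr ⟨w₂, rfl, hw1⟩), ?_⟩
        intro hmem
        rcases mem_Kat_cons_inl.1 hmem with h | ⟨s', hs', h⟩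
        · exact hw2 (Kat_dc L₂ (by simp) h)
        · have hac : a = c := by simpa using congrArg List.head? hs'
          have : s' = c :: w₂ := by simpa using (congrArg List.tail hs').symm
          subst this
          exact hw2 (Kat_dc L₂ (by simpa [hac] using List.Sublist.refl (c :: w₂)) h)

lemma q_inl_self {a : A} {L : List (Atom A)} {s} :
    a :: s ∈ Kat (.inl a :: L) ↔ s ∈ Kat L := by
  rw [mem_Kat_cons_inl]
  constructor
  · rintro (h | ⟨s', hs', h⟩)
    · exact Kat_dc L (by simp) h
    · have : s' = s := by simpa using (congrArg List.tail hs').symm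
      exact this ▸ h
  · intro h; exact Or.inr ⟨s, rfl, h⟩

lemma kat_nil_ne {x : Atom A} {M' : List (Atom A)} (hM : Reduced (x :: M')) :
    Kat (x :: M') ≠ Kat ([] : List (Atom A)) := by
  intro h
  cases x with
  | inl a =>
    have : [a] ∈ Kat (.inl a :: M') := mem_Kat_cons_inl.2 (Or.inr ⟨[], rfl, nil_mem_Kat _⟩)
    rw [h, mem_Kat_nil] at this; simp at this
  | inr b =>
    obtain ⟨e, he⟩ := hM.2 b (List.mem_cons_self)
    have : [e] ∈ Kat (.inr b :: M') :=
      mem_Kat_cons.2 ⟨[e], [], rfl, by intro x hx; simpa using (List.mem_singleton.1 hx) ▸ he, nil_mem_Kat _⟩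
    rw [h, mem_Kat_nil] at this; simp at this

/-- strictness for an `inr` head -/
lemma inr_ne_tail {c : Set A} {M' : List (Atom A)} (hM : Reduced (.inr c :: M')) :
    Kat (.inr c :: M') ≠ Kat M' := by
  intro hEq
  -- pick c₀ ∈ c compatible with M'
  have hcne : c.Nonempty := hM.2 c (List.mem_cons_self)
  obtain ⟨c₀, hc₀, hcompat⟩ : ∃ c₀, c₀ ∈ c ∧ compat c₀ M' := by
    match M' with
    | [] => exact ⟨hcne.choose, hcne.choose_spec, by rintro b L' ⟨⟩⟩
    | .inl d :: M'' => exact ⟨hcne.choose, hcne.choose_spec, by rintro b L' ⟨⟩⟩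
    | .inr c₂ :: M'' =>
      obtain ⟨c₀, h1, h2⟩ := Set.not_subset.1 (hM.rel.1)
      refine ⟨c₀, h1, ?_⟩
      rintro b L' heq
      obtain ⟨h1, -⟩ := List.cons_eq_cons.1 heq
      obtain rfl := Sum.inr.inj h1
      exact h2
  obtain ⟨w, hw1, hw2⟩ := (Wjoint M'.length M' le_rfl hM.tail).2 c₀ hcompat
  have : c₀ :: w ∈ Kat (.inr c :: M') := cons_mem_Kat_inr hc₀ (Kat_le_cons hw1)
  rw [hEq] at this
  exact hw2 this

/-- the inl/inr head clash -/
lemma no_inl_inr {a : A} {c : Set A} {L' M' : List (Atom A)}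
    (hL : Reduced (.inl a :: L')) (hM : Reduced (.inr c :: M'))
    (hK : Kat (.inl a :: L') = Kat (.inr c :: M')) : False := by
  obtain ⟨c₀, hc₀⟩ := hM.2 c (List.mem_cons_self)
  have hKP : Kat (.inl a :: L') = Kat L' := by
    apply Set.Subset.antisymm
    · intro s hs
      have h1 : c₀ :: s ∈ Kat (.inr c :: M') := cons_mem_Kat_inr hc₀ (hK ▸ hs)
      rw [← hK] at h1
      rcases mem_Kat_cons_inl.1 h1 with h | ⟨s', hs', h⟩
      · exact Kat_dc L' (by simp) h
      · have : s' = s := by simpa using (congrArg List.tail hs').symm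
        exact this ▸ h
    · intro s hs; exact Kat_le_cons hs
  obtain ⟨w, hw1, hw2⟩ := (Wjoint L'.length L' le_rfl hL.tail).2 a (compat_of_red_inl hL)
  have : a :: w ∈ Kat (.inl a :: L') := mem_Kat_cons_inl.2 (Or.inr ⟨w, rfl, hw1⟩)
  rw [hKP] at this
  exact hw2 this

/-- cancellation -/
lemma cancel {b : Set A} {L' M' : List (Atom A)}
    (hL : Reduced (.inr b :: L')) (hM : Reduced (.inr b :: M'))
    (hK : Kat (.inr b :: L') = Kat (.inr b :: M')) : ∀ ⦃s : List A⦄, s ∈ Kat L' → s ∈ Kat M' := by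
  intro s hs
  have main : ∃ t, t ∈ Kat (.inr b :: L') ∧ s.Sublist t ∧ ∀ d s', t = d :: s' → d ∉ b := by
    match L', hL, hs with
    | [], hL, hs =>
      rw [mem_Kat_nil] at hs; subst hs
      exact ⟨[], nil_mem_Kat _, List.nil_sublist _, by rintro d s' ⟨⟩⟩
    | .inl d :: L'', hL, hs =>
      have hdb : d ∉ b := hL.rel
      rcases mem_Kat_cons_inl.1 hs with h | ⟨s', heq, h⟩
      · refine ⟨d :: s, Kat_le_cons (mem_Kat_cons_inl.2 (Or.inr ⟨s, rfl, h⟩)), by simp, ?_⟩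
        rintro d' s' heq
        have : d' = d := by simpa using (congrArg List.head? heq).symm
        exact this ▸ hdb
      · subst heq
        refine ⟨d :: s', Kat_le_cons hs, List.Sublist.refl _, ?_⟩
        rintro d' s'' heq
        have : d' = d := by simpa using (congrArg List.head? heq).symm
        exact this ▸ hdb
    | .inr b' :: L'', hL, hs =>
      have hninc : ¬ b' ⊆ b := hL.rel.2
      obtain ⟨e, heb', heb⟩ := Set.not_subset.1 hninc
      refine ⟨e :: s, Kat_le_cons (cons_mem_Kat_inr heb' hs), by simp, ?_⟩
      rintro d s' heq
      have : d = e := by simpa using (congrArg List.head? heq).symm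
      exact this ▸ heb
  obtain ⟨t, htK, hst, hhead⟩ := main
  rw [hK] at htK
  have htM : t ∈ Kat M' := by
    match t, htK with
    | [], _ => exact nil_mem_Kat _
    | d :: s', htK => exact (cons_mem_Kat_inr_iff (hhead d s' rfl)).1 htK
  exact Kat_dc M' hst htM

lemma katInj : ∀ n : ℕ, ∀ L M : List (Atom A), L.length + M.length ≤ n →
    Reduced L → Reduced M → Kat L = Kat M → L = M := by
  intro n
  induction n with
  | zero =>
    intro L M hlen _ _ _
    have hL : L = [] := List.eq_nil_of_length_eq_zero (by omega)
    have hM : M = [] := List.eq_nil_of_length_eq_zero (by omega)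
    rw [hL, hM]
  | succ n ih =>
    intro L M hlen hLred hMred hK
    match L, M with
    | [], [] => rfl
    | [], x :: M' => exact absurd hK.symm (kat_nil_ne hMred)
    | x :: L', [] => exact absurd hK (kat_nil_ne hLred)
    | .inl a :: L', .inl b :: M' =>
      by_cases hab : a = b
      · subst hab
        have hPQ : Kat L' = Kat M' := by
          ext s
          rw [← q_inl_self (a := a) (L := L'), ← q_inl_self (a := a) (L := M'), hK]
        have : L' = M' := by
          apply ih L' M' ?_ hLred.tail hMred.tail hPQ
          simp only [List.length_cons] at hlen; omega
        rw [this]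
      · exfalso
        have hPQ : Kat L' = Kat M' := by
          apply Set.Subset.antisymm
          · intro s hs
            have h1 : a :: s ∈ Kat (.inl a :: L') := mem_Kat_cons_inl.2 (Or.inr ⟨s, rfl, hs⟩)
            rw [hK] at h1
            rcases mem_Kat_cons_inl.1 h1 with h | ⟨s', hs', h⟩
            · exact Kat_dc M' (by simp) h
            · exact absurd (by simpa using congrArg List.head? hs') hab
          · intro s hs
            have h1 : b :: s ∈ Kat (.inl b :: M') := mem_Kat_cons_inl.2 (Or.inr ⟨s, rfl, hs⟩)
            rw [← hK] at h1
            rcases mem_Kat_cons_inl.1 h1 with h | ⟨s', hs', h⟩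
            · exact Kat_dc L' (by simp) h
            · exact absurd (by simpa using (congrArg List.head? hs').symm) hab
        obtain ⟨w, hw1, hw2⟩ := (Wjoint L'.length L' le_rfl hLred.tail).2 a (compat_of_red_inl hLred)
        have h1 : a :: w ∈ Kat (.inl a :: L') := mem_Kat_cons_inl.2 (Or.inr ⟨w, rfl, hw1⟩)
        rw [hK] at h1
        rcases mem_Kat_cons_inl.1 h1 with h | ⟨s', hs', h⟩
        · rw [← hPQ] at h; exact hw2 h
        · exact hab (by simpa using congrArg List.head? hs')
    | .inl a :: L', .inr c :: M' => exact absurd hK (fun h => no_inl_inr hLred hMred h)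
    | .inr b :: L', .inl a :: M' => exact absurd hK.symm (fun h => no_inl_inr hMred hLred h)
    | .inr b :: L', .inr c :: M' =>
      have hbc : b = c := by
        have h1 : b ⊆ c := by
          by_contra hninc
          obtain ⟨e, heb, hec⟩ := Set.not_subset.1 hninc
          apply inr_ne_tail hMred
          apply Set.Subset.antisymm
          · intro s hs
            have h2 : e :: s ∈ Kat (.inr c :: M') := by
              rw [← hK]; exact cons_mem_Kat_inr heb (hK.symm ▸ hs)
            have h3 : e :: s ∈ Kat M' := (cons_mem_Kat_inr_iff hec).1 h2
            exact Kat_dc M' (by simp) h3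
          · intro s hs; exact Kat_le_cons hs
        have h2 : c ⊆ b := by
          by_contra hninc
          obtain ⟨e, hec, heb⟩ := Set.not_subset.1 hninc
          apply inr_ne_tail hLred
          apply Set.Subset.antisymm
          · intro s hs
            have h2 : e :: s ∈ Kat (.inr b :: L') := by
              rw [hK]; exact cons_mem_Kat_inr hec (hK ▸ hs)
            have h3 : e :: s ∈ Kat L' := (cons_mem_Kat_inr_iff heb).1 h2
            exact Kat_dc L' (by simp) h3
          · intro s hs; exact Kat_le_cons hs
        exact Set.Subset.antisymm h1 h2
      subst hbc
      have hPQ : Kat L' = Kat M' :=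
        Set.Subset.antisymm (fun s hs => cancel hLred hMred hK hs) (fun s hs => cancel hMred hLred hK.symm hs)
      have : L' = M' := by
        apply ih L' M' ?_ hLred.tail hMred.tail hPQ
        simp only [List.length_cons] at hlen; omega
      rw [this]

def atomize : List (List A) → List (Set A) → List (Atom A)
  | u0 :: us, b :: bs => u0.map Sum.inl ++ Sum.inr b :: atomize us bs
  | u0 :: [], [] => u0.map Sum.inl
  | _, _ => []

lemma atomize_cons (u0 : List A) (us : List (List A)) (b : Set A) (bs : List (Set A)) :
    atomize (u0 :: us) (b :: bs) = u0.map Sum.inl ++ Sum.inr b :: atomize us bs := by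
  simp [atomize]

lemma patternLang_cons (u0 : List A) (us : List (List A)) (b : Set A) (bs : List (Set A)) (n : ℕ) :
    patternLang (u0 :: us) (b :: bs) n = {u0} * (exactLang b) ^ n * patternLang us bs n := by
  simp [patternLang]

lemma mem_Kat_map_inl {u s : List A} : s ∈ Kat (u.map Sum.inl) ↔ s.Sublist u := by
  induction u generalizing s with
  | nil => rw [List.map_nil, mem_Kat_nil]; simp
  | cons a u ih =>
    rw [List.map_cons]
    rw [mem_Kat_cons_inl (a := a) (L := u.map Sum.inl), List.sublist_cons_iff]
    constructor
    · rintro (h | ⟨s', rfl, h⟩)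
      · exact Or.inl (ih.1 h)
      · exact Or.inr ⟨s', rfl, ih.1 h⟩
    · rintro (h | ⟨s', rfl, h⟩)
      · exact Or.inl (ih.2 h)
      · exact Or.inr ⟨s', rfl, ih.2 h⟩

lemma mem_Kat_append {X Y : List (Atom A)} {s : List A} :
    s ∈ Kat (X ++ Y) ↔ ∃ s1 s2, s = s1 ++ s2 ∧ s1 ∈ Kat X ∧ s2 ∈ Kat Y := by
  induction X generalizing s with
  | nil =>
    simp only [List.nil_append]
    constructor
    · intro h; exact ⟨[], s, rfl, nil_mem_Kat _, h⟩
    · rintro ⟨s1, s2, rfl, h1, h2⟩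
      rw [mem_Kat_nil] at h1; subst h1; exact h2
  | cons x X ih =>
    rw [List.cons_append, mem_Kat_cons]
    constructor
    · rintro ⟨t1, t2, rfl, h1, h2⟩
      obtain ⟨s1, s2, rfl, h3, h4⟩ := ih.1 h2
      exact ⟨t1 ++ s1, s2, by rw [List.append_assoc], mem_Kat_cons.2 ⟨t1, s1, rfl, h1, h3⟩, h4⟩
    · rintro ⟨s1, s2, rfl, h1, h2⟩
      obtain ⟨t1, t2, rfl, h3, h4⟩ := mem_Kat_cons.1 h1
      exact ⟨t1, t2 ++ s2, by rw [List.append_assoc], h3, ih.2 ⟨t2, s2, rfl, h4, h2⟩⟩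

lemma pow_content {b : Set A} {n : ℕ} {z : List A} (h : z ∈ (exactLang b) ^ n) :
    ∀ x ∈ z, x ∈ b := by
  induction n generalizing z with
  | zero =>
    rw [pow_zero] at h
    rw [Language.mem_one] at h; subst h; simp
  | succ n ih =>
    rw [pow_succ, Language.mem_mul] at h
    obtain ⟨z1, h1, z2, h2, rfl⟩ := h
    intro x hx
    rcases List.mem_append.1 hx with hx | hx
    · exact ih h1 x hx
    · have : content z2 = b := h2
      rw [← this]; exact hx

lemma pow_embed {b : Set A} {n : ℕ} {z y : List A} (h : z ∈ (exactLang b) ^ n)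
    (hy : ∀ x ∈ y, x ∈ b) (hlen : y.length ≤ n) : y.Sublist z := by
  induction n generalizing z y with
  | zero =>
    have : y = [] := List.eq_nil_of_length_eq_zero (Nat.le_zero.1 hlen)
    subst this; exact List.nil_sublist z
  | succ n ih =>
    rw [pow_succ', Language.mem_mul] at h
    obtain ⟨z1, h1, z2, h2, rfl⟩ := h
    cases y with
    | nil => exact List.nil_sublist _
    | cons a y' =>
      have ha : a ∈ z1 := by
        have : content z1 = b := h1
        have : a ∈ content z1 := by rw [this]; exact hy a (List.mem_cons_self)
        exact this
      obtain ⟨p, q, rfl⟩ := List.append_of_mem ha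
      have hy' : y'.Sublist z2 := ih h2 (fun x hx => hy x (List.mem_cons_of_mem a hx))
        (by simpa using Nat.succ_le_succ_iff.1 hlen)
      have : (a :: y').Sublist ((p ++ [a]) ++ (q ++ z2)) := by
        have h3 : [a].Sublist (p ++ [a]) := List.sublist_append_right p [a]
        have h4 : y'.Sublist (q ++ z2) := hy'.trans (List.sublist_append_right q z2)
        simpa using h3.append h4
      simpa [List.append_assoc] using this

lemma subw_char : ∀ (B : List (Set A)) (u : List (List A)), u.length = B.length + 1 →
    ∀ {n : ℕ} {v : List A}, v ∈ patternLang u B n →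
    ∀ s : List A, s.length ≤ n → (s.Sublist v ↔ s ∈ Kat (atomize u B)) := by
  intro B
  induction B with
  | nil =>
    intro u hu n v hv s hs
    match u, hu with
    | [u0], _ =>
      have hv0 : v = u0 := hv
      subst hv0
      show s.Sublist v ↔ s ∈ Kat (v.map Sum.inl)
      exact mem_Kat_map_inl.symm
  | cons b bs ih =>
    intro u hu n v hv s hs
    match u, hu with
    | u0 :: us, hu =>
      have hus : us.length = bs.length + 1 := by simpa using hu
      have hv' : v ∈ ({u0} : Language A) * (exactLang b) ^ n * patternLang us bs n := by
        rw [← patternLang_cons]; exact hv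
      rw [Language.mem_mul] at hv'
      obtain ⟨x, hx, v', hv'', rfl⟩ := hv'
      rw [Language.mem_mul] at hx
      obtain ⟨v0, hv0, z, hz, rfl⟩ := hx
      have hv0' : v0 = u0 := hv0
      subst hv0'
      have hatom := atomize_cons v0 us b bs
      rw [hatom]
      constructor
      · intro hsub
        rw [List.append_assoc, List.sublist_append_iff] at hsub
        obtain ⟨s1, s23, rfl, hs1, hs23⟩ := hsub
        rw [List.sublist_append_iff] at hs23
        obtain ⟨s2, s3, rfl, hs2, hs3⟩ := hs23
        apply mem_Kat_append.2
        refine ⟨s1, s2 ++ s3, rfl, mem_Kat_map_inl.2 hs1, ?_⟩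
        apply mem_Kat_cons.2
        refine ⟨s2, s3, rfl, ?_, ?_⟩
        · intro x hx; exact pow_content hz x (hs2.mem hx)
        · rw [← ih us hus hv'' s3 (by simp at hs; omega)]
          exact hs3
      · intro hmem
        obtain ⟨s1, s23, rfl, h1, h2⟩ := mem_Kat_append.1 hmem
        obtain ⟨s2, s3, rfl, h3, h4⟩ := mem_Kat_cons.1 h2
        have hs1 : s1.Sublist v0 := mem_Kat_map_inl.1 h1
        have hs2 : s2.Sublist z := pow_embed hz h3 (by simp at hs; omega)
        have hs3 : s3.Sublist v' := by
          rw [ih us hus hv'' s3 (by simp at hs; omega)]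
          exact h4
        have := (hs1.append hs2).append hs3
        simpa [List.append_assoc] using this

lemma chain'_map_inl (u : List A) : List.Chain' RA (u.map Sum.inl) := by
  induction u with
  | nil => exact List.isChain_nil
  | cons a u ih =>
    rw [List.map_cons, List.Chain', List.isChain_cons]
    refine ⟨?_, ih⟩
    intro y hy
    match u, y, hy with
    | a' :: u', y, hy =>
      have : Sum.inl a' = y := by simpa using hy
      subst this
      exact trivial

lemma proper_shift {u0 : List A} {us : List (List A)} {b : Set A} {bs : List (Set A)}
    (h : Proper (u0 :: us) (b :: bs)) : Proper us bs := by
  obtain ⟨h1, h2, h3⟩ := h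
  refine ⟨?_, ?_, ?_⟩
  · intro i hi a ha
    have := h1 (i + 1) (by simp; omega) a (by simpa using ha)
    simpa using this
  · intro i hi a ha
    have := h2 (i + 1) (by simp; omega) a (by simpa using ha)
    simpa using this
  · intro i hi he
    have := h3 (i + 1) (by simp; omega) (by simpa using he)
    simpa using this

lemma mem_atomize_inr : ∀ (B : List (Set A)) (u : List (List A)) (b : Set A),
    Sum.inr b ∈ atomize u B → b ∈ B := by
  intro B
  induction B with
  | nil =>
    intro u b hb
    exfalso
    match u with
    | [] => exact (List.not_mem_nil hb)
    | [u0] =>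
      have : Sum.inr b ∈ u0.map Sum.inl := hb
      obtain ⟨a, _, ha⟩ := List.mem_map.1 this
      simp at ha
    | u0 :: u1 :: us => exact (List.not_mem_nil hb)
  | cons c cs ih =>
    intro u b hb
    match u with
    | [] => exact absurd hb List.not_mem_nil
    | u0 :: us =>
      have : Sum.inr b ∈ u0.map Sum.inl ++ Sum.inr c :: atomize us cs := by
        rw [← atomize_cons]; exact hb
      rcases List.mem_append.1 this with h | h
      · obtain ⟨a, _, ha⟩ := List.mem_map.1 h
        simp at ha
      · rcases List.mem_cons.1 h with h | h
        · injection h with h'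
          rw [h']
          exact List.mem_cons_self
        · exact List.mem_cons_of_mem c (ih us b h)

lemma proper_reduced : ∀ (B : List (Set A)) (u : List (List A)), u.length = B.length + 1 →
    (∀ b ∈ B, b.Nonempty) → Proper u B → Reduced (atomize u B) := by
  intro B
  induction B with
  | nil =>
    intro u hu _ _
    match u, hu with
    | [u0], _ =>
      exact ⟨chain'_map_inl u0, fun b hb => absurd (mem_atomize_inr [] [u0] b hb) List.not_mem_nil⟩
  | cons b bs ih =>
    intro u hu hne hP
    match u, hu with
    | u0 :: us, hu =>
      have hus : us.length = bs.length + 1 := by simpa using hu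
      have hred' : Reduced (atomize us bs) :=
        ih us hus (fun c hc => hne c (List.mem_cons_of_mem b hc)) (proper_shift hP)
      constructor
      · rw [atomize_cons, List.Chain', List.isChain_append]
        refine ⟨chain'_map_inl u0, ?_, ?_⟩
        · rw [List.isChain_cons]
          refine ⟨?_, hred'.1⟩
          intro y hy
          -- y is the head of atomize us bs
          match us, hus, y, hy with
          | u1 :: us', hus, y, hy =>
            match bs, hus with
            | [], hus =>
              have hus' : us' = [] := by simpa using hus
              subst hus'
              have hy' : y ∈ (u1.map Sum.inl).head? := hy
              match u1, hy' with
              | a1 :: u1', hy' =>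
                have : Sum.inl a1 = y := by simpa using hy'
                subst this
                show a1 ∉ b
                have := hP.2.1 0 (by simp) a1 (by simp)
                simpa using this
            | c :: cs, hus =>
              rw [atomize_cons] at hy
              match u1 with
              | [] =>
                have : Sum.inr c = y := by simpa using hy
                subst this
                show ¬ b ⊆ c ∧ ¬ c ⊆ b
                have := hP.2.2 0 (by simp) (by simp)
                simpa using this
              | a1 :: u1' =>
                have : Sum.inl a1 = y := by simpa using hy
                subst this
                show a1 ∉ b
                have := hP.2.1 0 (by simp) a1 (by simp)
                simpa using this
        · intro x hx y hy
          have hy' : Sum.inr b = y := by simpa using hy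
          subst hy'
          rw [List.getLast?_map] at hx
          obtain ⟨a, ha, rfl⟩ := Option.map_eq_some_iff.1 (Option.mem_def.1 hx)
          show a ∉ b
          have := hP.1 0 (by simp) a (by simpa using ha)
          simpa using this
      · intro c hc
        have := mem_atomize_inr _ _ _ hc
        exact hne c this

lemma map_inl_inj_aux : ∀ (u0 t0 : List A) (b c : Set A) (X Y : List (Atom A)),
    u0.map Sum.inl ++ Sum.inr b :: X = t0.map Sum.inl ++ Sum.inr c :: Y →
    u0 = t0 ∧ b = c ∧ X = Y := by
  intro u0
  induction u0 with
  | nil =>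
    intro t0 b c X Y h
    match t0 with
    | [] =>
      simp only [List.map_nil, List.nil_append] at h
      obtain ⟨h1, h2⟩ := List.cons_eq_cons.1 h
      exact ⟨rfl, Sum.inr.inj h1, h2⟩
    | a :: t0' =>
      exfalso
      simp only [List.map_nil, List.nil_append, List.map_cons, List.cons_append] at h
      obtain ⟨h1, -⟩ := List.cons_eq_cons.1 h
      simp at h1
  | cons a u0' ih =>
    intro t0 b c X Y h
    match t0 with
    | [] =>
      exfalso
      simp only [List.map_cons, List.cons_append, List.map_nil, List.nil_append] at h
      obtain ⟨h1, -⟩ := List.cons_eq_cons.1 h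
      simp at h1
    | a' :: t0' =>
      simp only [List.map_cons, List.cons_append] at h
      obtain ⟨h1, h2⟩ := List.cons_eq_cons.1 h
      obtain rfl := Sum.inl.inj h1
      obtain ⟨h3, h4, h5⟩ := ih t0' b c X Y h2
      exact ⟨by rw [h3], h4, h5⟩

lemma atomize_inj : ∀ (B C : List (Set A)) (u t : List (List A)),
    u.length = B.length + 1 → t.length = C.length + 1 →
    atomize u B = atomize t C → u = t ∧ B = C := by
  intro B
  induction B with
  | nil =>
    intro C u t hu ht h
    match u, hu, C, t, ht with
    | [u0], _, [], [t0], _ =>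
      have h' : u0.map Sum.inl = t0.map Sum.inl := h
      exact ⟨by rw [List.map_injective_iff.2 Sum.inl_injective h'], rfl⟩
    | [u0], _, c :: cs, t0 :: ts, ht =>
      exfalso
      have hmem : Sum.inr c ∈ atomize (t0 :: ts) (c :: cs) := by
        rw [atomize_cons]
        exact List.mem_append.2 (Or.inr (List.mem_cons_self))
      rw [← h] at hmem
      have : Sum.inr c ∈ u0.map Sum.inl := hmem
      obtain ⟨x, -, hx⟩ := List.mem_map.1 this
      simp at hx
  | cons b bs ih =>
    intro C u t hu ht h
    match u, hu, C, t, ht with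
    | u0 :: us, hu, [], [t0], _ =>
      exfalso
      have hmem : Sum.inr b ∈ atomize (u0 :: us) (b :: bs) := by
        rw [atomize_cons]
        exact List.mem_append.2 (Or.inr (List.mem_cons_self))
      rw [h] at hmem
      have : Sum.inr b ∈ t0.map Sum.inl := hmem
      obtain ⟨x, -, hx⟩ := List.mem_map.1 this
      simp at hx
    | u0 :: us, hu, c :: cs, t0 :: ts, ht =>
      rw [atomize_cons, atomize_cons] at h
      obtain ⟨h1, h2, h3⟩ := map_inl_inj_aux u0 t0 b c _ _ h
      obtain ⟨h4, h5⟩ := ih cs us ts (by simpa using hu) (by simpa using ht) h3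
      exact ⟨by rw [h1, h4], by rw [h2, h5]⟩

end PPU

/-- two proper factorization patterns with `∼ₙ`-related adequate
sequences coincide. -/
theorem proper_patterns_unique {A : Type*}
    (u t : List (List A)) (B C : List (Set A))
    (hu : u.length = B.length + 1) (ht : t.length = C.length + 1)
    (hBne : ∀ b ∈ B, b.Nonempty) (hCne : ∀ c ∈ C, c.Nonempty)
    (hPB : Proper u B) (hPC : Proper t C)
    (v w : ℕ → List A)
    (hv : ∀ n, v n ∈ patternLang u B n)
    (hw : ∀ n, w n ∈ patternLang t C n)
    (hvw : ∀ n, simn n (v n) (w n)) :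
    u = t ∧ B = C := by
  have hKeq : PPU.Kat (PPU.atomize u B) = PPU.Kat (PPU.atomize t C) := by
    ext s
    have h1 := PPU.subw_char B u hu (hv s.length) s le_rfl
    have h2 := PPU.subw_char C t ht (hw s.length) s le_rfl
    have h3 : Subw s.length (v s.length) = Subw s.length (w s.length) := hvw s.length
    constructor
    · intro hs
      have hsv : s.Sublist (v s.length) := h1.2 hs
      have : s ∈ Subw s.length (v s.length) := ⟨le_rfl, hsv⟩
      rw [h3] at this
      exact h2.1 this.2
    · intro hs
      have hsw : s.Sublist (w s.length) := h2.2 hs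
      have : s ∈ Subw s.length (w s.length) := ⟨le_rfl, hsw⟩
      rw [← h3] at this
      exact h1.1 this.2
  have hr1 := PPU.proper_reduced B u hu hBne hPB
  have hr2 := PPU.proper_reduced C t ht hCne hPC
  have heq := PPU.katInj ((PPU.atomize u B).length + (PPU.atomize t C).length)
    (PPU.atomize u B) (PPU.atomize t C) le_rfl hr1 hr2 hKeq
  exact PPU.atomize_inj B C u t hu ht heq
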